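/- The 3×3 hermitian matrix H(z,α,s) with entries H₁₁ = g, H₁₂ = 0, H₁₃ = g·conj(a), H₂₁ = 0, H₂₂ = g_{L²}, H₂₃ = 0, H₃₁ = a·g, H₃₂ = 0, H₃₃ = g_{WP} + a·g·conj(a), where g = (α - conj α)/(s - conj s), g_{L²} = (i/2)(α - conj α)⁻¹, g_{WP} = (i/2)(α - conj α)/(s - conj s)², a = -(z - conj z)/(s - conj s), is positive definite for all z ∈ ℂ and α, s ∈ ℍ. -/

import Mathlib

open Complex Matrix
open scoped ComplexOrder

/-- The matrix of the natural metric on `ℂ × ℍ × ℍ`. -/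
noncomputable def Hmat (z α s : ℂ) : Matrix (Fin 3) (Fin 3) ℂ :=
  let g : ℂ := (α - (starRingEnd ℂ) α) / (s - (starRingEnd ℂ) s)
  let gL2 : ℂ := Complex.I / 2 * (α - (starRingEnd ℂ) α)⁻¹
  let gWP : ℂ := Complex.I / 2 * (α - (starRingEnd ℂ) α) / (s - (starRingEnd ℂ) s) ^ 2
  let a : ℂ := -(z - (starRingEnd ℂ) z) / (s - (starRingEnd ℂ) s)
  !![g, 0, g * (starRingEnd ℂ) a;
     0, gL2, 0;
     a * g, 0, gWP + a * g * (starRingEnd ℂ) a]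

/-- The matrix `H(z,α,s)` is positive definite for all `z ∈ ℂ` and `α, s` in the
upper half-plane. -/
theorem Hmat_posDef (z α s : ℂ) (hα : 0 < α.im) (hs : 0 < s.im) :
    (Hmat z α s).PosDef := by
  have hA0 : (α.im : ℂ) ≠ 0 := by exact_mod_cast hα.ne'
  have hS0 : (s.im : ℂ) ≠ 0 := by exact_mod_cast hs.ne'
  set c1 : ℝ := α.im / s.im with hc1def
  set c2 : ℝ := 1 / (4 * α.im) with hc2def
  set c3 : ℝ := α.im / (4 * s.im ^ 2) with hc3def
  set b : ℝ := -(z.im / s.im) with hbdef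
  have hg : (α - (starRingEnd ℂ) α) / (s - (starRingEnd ℂ) s) = ((c1 : ℝ) : ℂ) := by
    rw [hc1def, Complex.sub_conj, Complex.sub_conj]; push_cast; field_simp
  have hgL2 : Complex.I / 2 * (α - (starRingEnd ℂ) α)⁻¹ = ((c2 : ℝ) : ℂ) := by
    rw [hc2def, Complex.sub_conj]; push_cast; field_simp; ring
  have hgWP : Complex.I / 2 * (α - (starRingEnd ℂ) α) / (s - (starRingEnd ℂ) s) ^ 2
      = ((c3 : ℝ) : ℂ) := by
    rw [hc3def, Complex.sub_conj, Complex.sub_conj]; push_cast; field_simp; ring_nf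
    try simp [Complex.I_sq]
  have ha : -(z - (starRingEnd ℂ) z) / (s - (starRingEnd ℂ) s) = ((b : ℝ) : ℂ) := by
    rw [hbdef, Complex.sub_conj, Complex.sub_conj]; push_cast; field_simp
  have hM : Hmat z α s
      = !![((c1 : ℝ) : ℂ), 0, (c1 : ℂ) * (b : ℂ);
           0, ((c2 : ℝ) : ℂ), 0;
           (b : ℂ) * (c1 : ℂ), 0, ((c3 : ℝ) : ℂ) + (b : ℂ) * (c1 : ℂ) * (b : ℂ)] := by
    unfold Hmat
    simp only [hg, hgL2, hgWP, ha, Complex.conj_ofReal]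
  rw [hM]
  have hc1 : 0 < c1 := by rw [hc1def]; positivity
  have hc2 : 0 < c2 := by rw [hc2def]; positivity
  have hc3 : 0 < c3 := by rw [hc3def]; positivity
  rw [Matrix.posDef_iff_dotProduct_mulVec]
  constructor
  · ext i j
    fin_cases i <;> fin_cases j <;>
      simp [Matrix.conjTranspose_apply, Complex.conj_ofReal, _root_.map_mul, mul_comm]
  · intro x hx
    have hexp : star x ⬝ᵥ ((!![((c1 : ℝ) : ℂ), 0, (c1 : ℂ) * (b : ℂ);
           0, ((c2 : ℝ) : ℂ), 0;
           (b : ℂ) * (c1 : ℂ), 0, ((c3 : ℝ) : ℂ) + (b : ℂ) * (c1 : ℂ) * (b : ℂ)]) *ᵥ x)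
        = ((c1 * Complex.normSq (x 0 + (b : ℂ) * x 2) + c2 * Complex.normSq (x 1)
            + c3 * Complex.normSq (x 2) : ℝ) : ℂ) := by
      simp only [Matrix.mulVec, dotProduct, Fin.sum_univ_three]
      push_cast [← Complex.mul_conj]
      simp only [Pi.star_apply, Complex.star_def, map_add, _root_.map_mul, Complex.conj_ofReal,
        Matrix.cons_val', Matrix.cons_val_zero, Matrix.cons_val_one, Matrix.head_cons,
        Matrix.empty_val', Matrix.cons_val_fin_one, Matrix.head_fin_const, Matrix.of_apply,
        Matrix.cons_val_two, Matrix.tail_cons]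
      ring
    rw [hexp]
    rw [Complex.zero_lt_real]
    have t1 : 0 ≤ c1 * Complex.normSq (x 0 + (b : ℂ) * x 2) := mul_nonneg hc1.le (Complex.normSq_nonneg _)
    have t2 : 0 ≤ c2 * Complex.normSq (x 1) := mul_nonneg hc2.le (Complex.normSq_nonneg _)
    have t3 : 0 ≤ c3 * Complex.normSq (x 2) := mul_nonneg hc3.le (Complex.normSq_nonneg _)
    by_cases h2 : x 2 = 0
    · by_cases h1 : x 1 = 0
      · have h0 : x 0 ≠ 0 := by
          intro h0
          apply hx
          ext i
          fin_cases i <;> assumption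
        have : 0 < c1 * Complex.normSq (x 0 + (b : ℂ) * x 2) := by
          rw [h2]
          have : x 0 + (b : ℂ) * 0 = x 0 := by ring
          rw [this]
          exact mul_pos hc1 (Complex.normSq_pos.mpr h0)
        linarith
      · have : 0 < c2 * Complex.normSq (x 1) := mul_pos hc2 (Complex.normSq_pos.mpr h1)
        linarith
    · have : 0 < c3 * Complex.normSq (x 2) := mul_pos hc3 (Complex.normSq_pos.mpr h2)
      linarith
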